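/- arXiv:2108.12647 — 6 statements merged into one kernel-verified Lean document; each statement's English description precedes it below -/
import Mathlib

section
/- If (X, Y, Z) is a Markov triangle of finite random variables on a probability space (Ω, Σ, μ), then the conditional entropies satisfy H(Z|X) = H(Z|Y) + H(Y|X). -/
open MeasureTheory Filter Topology

/-- A finite random variable on a measurable space `Ω`: a map into a finite set whose
fibers are measurable. -/
structure FRV (Ω : Type) [MeasurableSpace Ω] where
  α : Type
  fintype : Fintype α
  X : Ω → α
  meas : ∀ a : α, MeasurableSet (X ⁻¹' {a})

attribute [instance] FRV.fintype

/-- A probability distribution on a finite set. -/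
def IsProbDist {β : Type} [Fintype β] (p : β → ℝ) : Prop :=
  (∀ b, 0 ≤ p b) ∧ ∑ b, p b = 1

/-- Shannon entropy of a distribution on a finite set. -/
noncomputable def entropyOfDist {β : Type} [Fintype β] (p : β → ℝ) : ℝ :=
  -∑ b, p b * Real.log (p b)

namespace FRV

variable {Ω Ω' : Type} [MeasurableSpace Ω] [MeasurableSpace Ω']

/-- The probability mass function of a finite random variable. -/
noncomputable def pmf (μ : Measure Ω) (X : FRV Ω) : X.α → ℝ :=
  fun a => (μ (X.X ⁻¹' {a})).toReal

/-- The Shannon entropy of a finite random variable. -/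
noncomputable def entropy (μ : Measure Ω) (X : FRV Ω) : ℝ :=
  entropyOfDist (X.pmf μ)

/-- The canonical product `𝒫(X,Y)` of two finite random variables on a common space. -/
def prod (X Y : FRV Ω) : FRV Ω where
  α := X.α × Y.α
  fintype := inferInstance
  X := fun ω => (X.X ω, Y.X ω)
  meas := by
    rintro ⟨a, b⟩
    have h : (fun ω => (X.X ω, Y.X ω)) ⁻¹' {(a, b)} = X.X ⁻¹' {a} ∩ Y.X ⁻¹' {b} := by
      ext ω; simp [Prod.ext_iff]
    rw [h]
    exact (X.meas a).inter (Y.meas b)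

/-- Post-composition of a finite random variable with a map of finite sets. -/
def map (X : FRV Ω) {β : Type} [Fintype β] (f : X.α → β) : FRV Ω where
  α := β
  fintype := inferInstance
  X := f ∘ X.X
  meas := by
    intro b
    have h : (f ∘ X.X) ⁻¹' {b} = ⋃ a ∈ {a | f a = b}, X.X ⁻¹' {a} := by
      ext ω; simp
    rw [h]
    exact MeasurableSet.biUnion (Set.to_countable _) fun a _ => X.meas a

/-- Pullback of a finite random variable along a measurable map. -/
def comap (X : FRV Ω) (π : Ω' → Ω) (hπ : Measurable π) : FRV Ω' where
  α := X.α
  fintype := X.fintype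
  X := X.X ∘ π
  meas := by
    intro a
    rw [Set.preimage_comp]
    exact hπ (X.meas a)

/-- A constant random variable: one whose support is a one-element set. -/
def IsConstant (C : FRV Ω) : Prop := ∀ a b : C.α, a = b

/-- Weak convergence (convergence in distribution) of a sequence of finite random
variables: eventually the supports coincide, and the probability mass functions
converge pointwise. -/
def WeakConv (μ : Measure Ω) (Xs : ℕ → FRV Ω) (X : FRV Ω) : Prop :=
  (∃ N, ∀ n ≥ N, (Xs n).α = X.α) ∧
  ∀ a : X.α,
    Tendsto
      (fun n => @dite _ ((Xs n).α = X.α) (Classical.dec _)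
        (fun h => (Xs n).pmf μ (cast h.symm a)) (fun _ => 0))
      atTop (𝓝 (X.pmf μ a))

/-- Weak convergence of a sequence of pairs of finite random variables: weak convergence
of the canonical products. -/
def WeakConvPair (μ : Measure Ω) (Xs Ys : ℕ → FRV Ω) (X Y : FRV Ω) : Prop :=
  WeakConv μ (fun n => (Xs n).prod (Ys n)) (X.prod Y)

/-- The discrete measure on a finite set associated with a real-valued weight function. -/
noncomputable def discMeasure {𝒳 : Type} [Fintype 𝒳] [MeasurableSpace 𝒳] (p : 𝒳 → ℝ) :
    Measure 𝒳 :=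
  Measure.sum fun x => ENNReal.ofReal (p x) • Measure.dirac x

/-- The `p`-weighted convex sum of a family of finite random variables, a random variable
on `𝒳 × Ω` valued in the disjoint union `Σ x, 𝒴ˣ` (the weights `p` enter through the
product measure `(discMeasure p).prod μ` on `𝒳 × Ω`). -/
def convexSum {𝒳 : Type} [Fintype 𝒳] [MeasurableSpace 𝒳] [MeasurableSingletonClass 𝒳]
    (Y : 𝒳 → FRV Ω) : FRV (𝒳 × Ω) where
  α := Σ x : 𝒳, (Y x).α
  fintype := inferInstance
  X := fun q => ⟨q.1, (Y q.1).X q.2⟩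
  meas := by
    rintro ⟨x₀, y₀⟩
    have h : (fun q : 𝒳 × Ω => (⟨q.1, (Y q.1).X q.2⟩ : Σ x : 𝒳, (Y x).α)) ⁻¹' {⟨x₀, y₀⟩}
        = {x₀} ×ˢ ((Y x₀).X ⁻¹' {y₀}) := by
      ext ⟨x, ω⟩
      simp only [Set.mem_preimage, Set.mem_singleton_iff, Set.mem_prod, Sigma.mk.inj_iff]
      constructor
      · rintro ⟨rfl, h2⟩
        exact ⟨rfl, eq_of_heq h2⟩
      · rintro ⟨rfl, h2⟩
        exact ⟨rfl, heq_of_eq h2⟩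
    rw [h]
    exact (measurableSet_singleton x₀).prod ((Y x₀).meas y₀)

end FRV

section InfoMeasures

variable {Ω : Type} [MeasurableSpace Ω]

/-- The joint distribution function `ϑ(x,y) = μ(X⁻¹{x} ∩ Y⁻¹{y})` of a pair of finite
random variables. -/
noncomputable def jointDist (μ : Measure Ω) (X Y : FRV Ω) : X.α → Y.α → ℝ :=
  fun a b => (μ (X.X ⁻¹' {a} ∩ Y.X ⁻¹' {b})).toReal

/-- The joint entropy `H(X,Y)` of a pair of finite random variables. -/
noncomputable def jointEntropy (μ : Measure Ω) (X Y : FRV Ω) : ℝ :=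
  -∑ a, ∑ b, jointDist μ X Y a b * Real.log (jointDist μ X Y a b)

/-- The mutual information `I(X,Y) = H(X) + H(Y) - H(X,Y)`. -/
noncomputable def mutualInfo (μ : Measure Ω) (X Y : FRV Ω) : ℝ :=
  X.entropy μ + Y.entropy μ - jointEntropy μ X Y

/-- The conditional distribution `q(y|x)` of `Y` given `X = x`. -/
noncomputable def condDist (μ : Measure Ω) (X Y : FRV Ω) : X.α → Y.α → ℝ :=
  fun a b => if X.pmf μ a ≠ 0 then jointDist μ X Y a b / X.pmf μ a else 0

/-- The conditional entropy `H(Y|X) = ∑ₓ p(x) H(q(·|x))`. -/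
noncomputable def condEntropy (μ : Measure Ω) (X Y : FRV Ω) : ℝ :=
  ∑ a, X.pmf μ a * entropyOfDist (condDist μ X Y a)

/-- `h : 𝒵 × 𝒳 → 𝒴` is a mediator function for the triple `(X, Y, Z)` if
`r(z|x) = p(z|h(z,x)) · q(h(z,x)|x)` for all `(z,x)`. -/
def IsMediator (μ : Measure Ω) (X Y Z : FRV Ω) (h : Z.α × X.α → Y.α) : Prop :=
  ∀ z x, condDist μ X Z x z = condDist μ Y Z (h (z, x)) z * condDist μ X Y x (h (z, x))

/-- A triple `(X, Y, Z)` of finite random variables is a Markov triangle if it admits a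
mediator function. -/
def IsMarkovTriangle (μ : Measure Ω) (X Y Z : FRV Ω) : Prop :=
  ∃ h : Z.α × X.α → Y.α, IsMediator μ X Y Z h

end InfoMeasures

/-- A map assigning a real number to every ordered pair of finite random variables
defined on a common probability space. -/
abbrev PairFunctional :=
  ∀ (Ω : Type) [MeasurableSpace Ω], Measure Ω → FRV Ω → FRV Ω → ℝ

namespace PF

/-- `F` is non-negative. -/
def Nonneg (F : PairFunctional) : Prop :=
  ∀ (Ω : Type) [MeasurableSpace Ω] (μ : Measure Ω) [IsProbabilityMeasure μ]
    (X Y : FRV Ω), 0 ≤ F Ω μ X Y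

/-- `F` is symmetric. -/
def Symm (F : PairFunctional) : Prop :=
  ∀ (Ω : Type) [MeasurableSpace Ω] (μ : Measure Ω) [IsProbabilityMeasure μ]
    (X Y : FRV Ω), F Ω μ X Y = F Ω μ Y X

/-- `F` is continuous: it respects weak convergence of pairs. -/
def Continuous (F : PairFunctional) : Prop :=
  ∀ (Ω : Type) [MeasurableSpace Ω] (μ : Measure Ω) [IsProbabilityMeasure μ]
    (Xs Ys : ℕ → FRV Ω) (X Y : FRV Ω), FRV.WeakConvPair μ Xs Ys X Y →
    Tendsto (fun n => F Ω μ (Xs n) (Ys n)) atTop (𝓝 (F Ω μ X Y))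

/-- `F` is weakly functorial: `F(X,Z) = F(X,Y) + F(Y,Z) - F(Y,Y)` on Markov triangles. -/
def WeaklyFunctorial (F : PairFunctional) : Prop :=
  ∀ (Ω : Type) [MeasurableSpace Ω] (μ : Measure Ω) [IsProbabilityMeasure μ]
    (X Y Z : FRV Ω), IsMarkovTriangle μ X Y Z →
    F Ω μ X Z = F Ω μ X Y + F Ω μ Y Z - F Ω μ Y Y

/-- `F` is invariant under pullbacks along measure-preserving maps. -/
def PullbackInvariant (F : PairFunctional) : Prop :=
  ∀ (Ω Ω' : Type) [MeasurableSpace Ω] [MeasurableSpace Ω']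
    (μ : Measure Ω) (μ' : Measure Ω') [IsProbabilityMeasure μ] [IsProbabilityMeasure μ']
    (π : Ω' → Ω) (hπ : MeasurePreserving π μ' μ) (X Y : FRV Ω),
    F Ω μ X Y = F Ω' μ' (X.comap π hπ.measurable) (Y.comap π hπ.measurable)

/-- `F(X,C) = 0` for every constant random variable `C`. -/
def VanishesOnConstants (F : PairFunctional) : Prop :=
  ∀ (Ω : Type) [MeasurableSpace Ω] (μ : Measure Ω) [IsProbabilityMeasure μ]
    (X C : FRV Ω), C.IsConstant → F Ω μ X C = 0

/-- `F` is strongly additive: for a finite random variable `X` with probability mass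
function `p` and a family of pairs `(Yˣ, Zˣ)` indexed by the support of `X`,
`F(⊕ₓ p(x)(Yˣ,Zˣ)) = F(X,X) + ∑ₓ p(x) F(Yˣ,Zˣ)`. -/
def StronglyAdditive (F : PairFunctional) : Prop :=
  ∀ (Ω : Type) [MeasurableSpace Ω] (μ : Measure Ω) [IsProbabilityMeasure μ]
    (X : FRV Ω) (Y Z : X.α → FRV Ω),
    letI : MeasurableSpace X.α := ⊤
    letI : MeasurableSingletonClass X.α := ⟨fun _ => MeasurableSpace.measurableSet_top⟩
    F (X.α × Ω) ((FRV.discMeasure (X.pmf μ)).prod μ) (FRV.convexSum Y) (FRV.convexSum Z)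
      = F Ω μ X X + ∑ x, X.pmf μ x * F Ω μ (Y x) (Z x)

end PF

/-- Mutual information as a pair functional. -/
noncomputable def MIfun : PairFunctional := fun _ _ μ X Y => mutualInfo μ X Y

section AuxCE

variable {Ω : Type} [MeasurableSpace Ω] (μ : Measure Ω) [IsProbabilityMeasure μ]

omit [IsProbabilityMeasure μ] in
lemma pmf_nonneg' (X : FRV Ω) (x : X.α) : 0 ≤ X.pmf μ x := ENNReal.toReal_nonneg

omit [IsProbabilityMeasure μ] in
lemma jointDist_nonneg' (X Y : FRV Ω) (x : X.α) (y : Y.α) : 0 ≤ jointDist μ X Y x y :=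
  ENNReal.toReal_nonneg

lemma jointDist_le_pmf' (X Y : FRV Ω) (x : X.α) (y : Y.α) :
    jointDist μ X Y x y ≤ X.pmf μ x :=
  ENNReal.toReal_mono (measure_ne_top μ _) (measure_mono Set.inter_subset_left)

lemma sum_meas_inter' (Y : FRV Ω) (A : Set Ω) (hA : MeasurableSet A) :
    ∑ y, (μ (A ∩ Y.X ⁻¹' {y})).toReal = (μ A).toReal := by
  classical
  rw [← ENNReal.toReal_sum (fun y _ => measure_ne_top μ _)]
  congr 1
  rw [← measure_biUnion_finset (f := fun y => A ∩ Y.X ⁻¹' {y})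
      ?_ (fun y _ => hA.inter (Y.meas y))]
  · congr 1
    ext ω
    simp
  · intro a _ b _ hab
    simp only [Function.onFun, Set.disjoint_left]
    rintro ω ⟨-, h1⟩ ⟨-, h2⟩
    exact hab (by simp only [Set.mem_preimage, Set.mem_singleton_iff] at h1 h2; rw [← h1, h2])

lemma sum_jointDist_right' (X Y : FRV Ω) (x : X.α) :
    ∑ y, jointDist μ X Y x y = X.pmf μ x :=
  sum_meas_inter' μ Y _ (X.meas x)

lemma sum_jointDist_left' (X Y : FRV Ω) (y : Y.α) :
    ∑ x, jointDist μ X Y x y = Y.pmf μ y := by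
  have h := sum_meas_inter' μ X (Y.X ⁻¹' {y}) (Y.meas y)
  have h2 : ∑ x, jointDist μ X Y x y = ∑ x, (μ (Y.X ⁻¹' {y} ∩ X.X ⁻¹' {x})).toReal :=
    Finset.sum_congr rfl fun x _ => by rw [jointDist, Set.inter_comm]
  rw [h2, h]
  rfl

lemma sum_pmf' (X : FRV Ω) : ∑ x, X.pmf μ x = 1 := by
  have h := sum_meas_inter' μ X Set.univ MeasurableSet.univ
  simpa [FRV.pmf] using h

lemma pmf_mul_condDist' (X Y : FRV Ω) (x : X.α) (y : Y.α) :
    X.pmf μ x * condDist μ X Y x y = jointDist μ X Y x y := by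
  by_cases hp : X.pmf μ x = 0
  · have h0 : jointDist μ X Y x y = 0 :=
      le_antisymm (hp ▸ jointDist_le_pmf' μ X Y x y) (jointDist_nonneg' μ X Y x y)
    simp [condDist, hp, h0]
  · simp only [condDist, hp, ne_eq, not_false_eq_true, if_true]
    field_simp

omit [IsProbabilityMeasure μ] in
lemma condDist_nonneg' (X Y : FRV Ω) (x : X.α) (y : Y.α) : 0 ≤ condDist μ X Y x y := by
  unfold condDist
  split
  · exact div_nonneg (jointDist_nonneg' μ X Y x y) (pmf_nonneg' μ X x)
  · exact le_refl 0

lemma sum_condDist_le_one' (X Y : FRV Ω) (x : X.α) :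
    ∑ y, condDist μ X Y x y ≤ 1 := by
  by_cases hp : X.pmf μ x = 0
  · simp [condDist, hp]
  · have h : ∑ y, condDist μ X Y x y = 1 := by
      simp only [condDist, hp, ne_eq, not_false_eq_true, if_true]
      rw [← Finset.sum_div, sum_jointDist_right', div_self hp]
    rw [h]

lemma condEntropy_eq' (X W : FRV Ω) :
    condEntropy μ X W
      = -∑ x, ∑ w, jointDist μ X W x w * Real.log (condDist μ X W x w) := by
  unfold condEntropy entropyOfDist
  rw [← Finset.sum_neg_distrib]
  refine Finset.sum_congr rfl fun x _ => ?_
  rw [mul_neg, Finset.mul_sum]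
  congr 1
  refine Finset.sum_congr rfl fun w _ => ?_
  rw [← mul_assoc, pmf_mul_condDist']

end AuxCE

/-- If `(X,Y,Z)` is a Markov triangle, then `H(Z|X) = H(Z|Y) + H(Y|X)`. -/
theorem condEntropy_markovTriangle {Ω : Type} [MeasurableSpace Ω] (μ : Measure Ω)
    [IsProbabilityMeasure μ] (X Y Z : FRV Ω) (h : IsMarkovTriangle μ X Y Z) :
    condEntropy μ X Z = condEntropy μ Y Z + condEntropy μ X Y := by
  classical
  obtain ⟨m, hm⟩ := h
  have fiber_sum : ∀ {ι κ : Type} [Fintype ι] [Fintype κ] (g : ι → κ) (f : ι → ℝ),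
      ∑ j : κ, ∑ i ∈ Finset.univ.filter (fun i => g i = j), f i = ∑ i : ι, f i := by
    intro ι κ _ _ g f
    simp only [Finset.sum_filter]
    rw [Finset.sum_comm]
    refine Finset.sum_congr rfl fun i _ => ?_
    simp
  -- Key pointwise identity: jointDist X Z factors through the mediator.
  have key : ∀ (z : Z.α) (x : X.α),
      jointDist μ X Z x z
        = condDist μ Y Z (m (z, x)) z * jointDist μ X Y x (m (z, x)) := by
    intro z x
    rw [← pmf_mul_condDist' μ X Z x z, hm z x, ← pmf_mul_condDist' μ X Y x (m (z, x))]
    ring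
  -- Claim 1: for each `x`, summing the joint over a fiber of `m` gives `jointDist X Y`.
  have claim1 : ∀ (x : X.α) (y : Y.α),
      ∑ z ∈ Finset.univ.filter (fun z => m (z, x) = y), jointDist μ X Z x z
        = jointDist μ X Y x y := by
    intro x
    have hle : ∀ y : Y.α,
        ∑ z ∈ Finset.univ.filter (fun z => m (z, x) = y), jointDist μ X Z x z
          ≤ jointDist μ X Y x y := by
      intro y
      calc ∑ z ∈ Finset.univ.filter (fun z => m (z, x) = y), jointDist μ X Z x z
          = ∑ z ∈ Finset.univ.filter (fun z => m (z, x) = y),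
              jointDist μ X Y x y * condDist μ Y Z y z := by
            refine Finset.sum_congr rfl fun z hz => ?_
            rw [Finset.mem_filter] at hz
            rw [key z x, hz.2, mul_comm]
        _ = jointDist μ X Y x y
              * ∑ z ∈ Finset.univ.filter (fun z => m (z, x) = y), condDist μ Y Z y z := by
            rw [Finset.mul_sum]
        _ ≤ jointDist μ X Y x y * 1 := by
            refine mul_le_mul_of_nonneg_left ?_ (jointDist_nonneg' μ X Y x y)
            refine le_trans (Finset.sum_le_sum_of_subset_of_nonneg
              (Finset.subset_univ _) (fun z _ _ => condDist_nonneg' μ Y Z y z)) ?_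
            exact sum_condDist_le_one' μ Y Z y
        _ = jointDist μ X Y x y := mul_one _
    have hsum :
        ∑ y, (∑ z ∈ Finset.univ.filter (fun z => m (z, x) = y), jointDist μ X Z x z)
          = ∑ y, jointDist μ X Y x y := by
      rw [fiber_sum (fun z => m (z, x)) (fun z => jointDist μ X Z x z),
        sum_jointDist_right', sum_jointDist_right']
    intro y
    exact (Finset.sum_eq_sum_iff_of_le (fun y _ => hle y)).mp hsum y (Finset.mem_univ y)
  -- Claim 2: for each `(y, z)`, summing the joint over a fiber of `m` gives
  -- `jointDist Y Z`.
  have claim2 : ∀ (y : Y.α) (z : Z.α),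
      ∑ x ∈ Finset.univ.filter (fun x => m (z, x) = y), jointDist μ X Z x z
        = jointDist μ Y Z y z := by
    have hle : ∀ p : Y.α × Z.α,
        ∑ x ∈ Finset.univ.filter (fun x => m (p.2, x) = p.1), jointDist μ X Z x p.2
          ≤ jointDist μ Y Z p.1 p.2 := by
      rintro ⟨y, z⟩
      calc ∑ x ∈ Finset.univ.filter (fun x => m (z, x) = y), jointDist μ X Z x z
          = ∑ x ∈ Finset.univ.filter (fun x => m (z, x) = y),
              condDist μ Y Z y z * jointDist μ X Y x y := by
            refine Finset.sum_congr rfl fun x hx => ?_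
            rw [Finset.mem_filter] at hx
            rw [key z x, hx.2]
        _ = condDist μ Y Z y z
              * ∑ x ∈ Finset.univ.filter (fun x => m (z, x) = y), jointDist μ X Y x y := by
            rw [Finset.mul_sum]
        _ ≤ condDist μ Y Z y z * ∑ x, jointDist μ X Y x y := by
            refine mul_le_mul_of_nonneg_left ?_ (condDist_nonneg' μ Y Z y z)
            exact Finset.sum_le_sum_of_subset_of_nonneg (Finset.subset_univ _)
              (fun x _ _ => jointDist_nonneg' μ X Y x y)
        _ = condDist μ Y Z y z * Y.pmf μ y := by rw [sum_jointDist_left']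
        _ = jointDist μ Y Z y z := by rw [mul_comm, pmf_mul_condDist']
    have hsum :
        ∑ p : Y.α × Z.α,
            (∑ x ∈ Finset.univ.filter (fun x => m (p.2, x) = p.1), jointDist μ X Z x p.2)
          = ∑ p : Y.α × Z.α, jointDist μ Y Z p.1 p.2 := by
      rw [Fintype.sum_prod_type, Fintype.sum_prod_type]
      calc ∑ y : Y.α, ∑ z : Z.α,
              ∑ x ∈ Finset.univ.filter (fun x => m (z, x) = y), jointDist μ X Z x z
          = ∑ z : Z.α, ∑ y : Y.α,
              ∑ x ∈ Finset.univ.filter (fun x => m (z, x) = y), jointDist μ X Z x z :=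
            Finset.sum_comm
        _ = ∑ z : Z.α, ∑ x : X.α, jointDist μ X Z x z := by
            refine Finset.sum_congr rfl fun z _ => ?_
            exact fiber_sum _ _
        _ = ∑ x : X.α, ∑ z : Z.α, jointDist μ X Z x z := Finset.sum_comm
        _ = ∑ x : X.α, X.pmf μ x := by
            refine Finset.sum_congr rfl fun x _ => sum_jointDist_right' μ X Z x
        _ = 1 := sum_pmf' μ X
        _ = ∑ y : Y.α, Y.pmf μ y := (sum_pmf' μ Y).symm
        _ = ∑ y : Y.α, ∑ z : Z.α, jointDist μ Y Z y z := by
            refine Finset.sum_congr rfl fun y _ => (sum_jointDist_right' μ Y Z y).symm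
    intro y z
    exact (Finset.sum_eq_sum_iff_of_le (fun p _ => hle p)).mp hsum (y, z)
      (Finset.mem_univ (y, z))
  -- Pointwise splitting of the logarithm.
  have logsplit : ∀ (x : X.α) (z : Z.α),
      jointDist μ X Z x z * Real.log (condDist μ X Z x z)
        = jointDist μ X Z x z * Real.log (condDist μ Y Z (m (z, x)) z)
          + jointDist μ X Z x z * Real.log (condDist μ X Y x (m (z, x))) := by
    intro x z
    by_cases hj : jointDist μ X Z x z = 0
    · simp [hj]
    · have hp : X.pmf μ x ≠ 0 := by
        intro hp0
        exact hj (le_antisymm (hp0 ▸ jointDist_le_pmf' μ X Z x z)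
          (jointDist_nonneg' μ X Z x z))
      have hc : condDist μ X Z x z ≠ 0 := by
        intro hc0
        apply hj
        rw [← pmf_mul_condDist' μ X Z x z, hc0, mul_zero]
      rw [hm z x] at hc ⊢
      have h1 : condDist μ Y Z (m (z, x)) z ≠ 0 := left_ne_zero_of_mul hc
      have h2 : condDist μ X Y x (m (z, x)) ≠ 0 := right_ne_zero_of_mul hc
      rw [Real.log_mul h1 h2, mul_add]
  -- Assemble everything.
  rw [condEntropy_eq' μ X Z, condEntropy_eq' μ Y Z, condEntropy_eq' μ X Y]
  have hsplit :
      ∑ x, ∑ z, jointDist μ X Z x z * Real.log (condDist μ X Z x z)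
        = (∑ x, ∑ z, jointDist μ X Z x z * Real.log (condDist μ Y Z (m (z, x)) z))
          + ∑ x, ∑ z, jointDist μ X Z x z * Real.log (condDist μ X Y x (m (z, x))) := by
    rw [← Finset.sum_add_distrib]
    refine Finset.sum_congr rfl fun x _ => ?_
    rw [← Finset.sum_add_distrib]
    exact Finset.sum_congr rfl fun z _ => logsplit x z
  have hB : ∑ x, ∑ z, jointDist μ X Z x z * Real.log (condDist μ X Y x (m (z, x)))
      = ∑ x, ∑ y, jointDist μ X Y x y * Real.log (condDist μ X Y x y) := by
    refine Finset.sum_congr rfl fun x _ => ?_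
    calc ∑ z, jointDist μ X Z x z * Real.log (condDist μ X Y x (m (z, x)))
        = ∑ y, ∑ z ∈ Finset.univ.filter (fun z => m (z, x) = y),
            jointDist μ X Z x z * Real.log (condDist μ X Y x (m (z, x))) :=
          (fiber_sum _ _).symm
      _ = ∑ y, jointDist μ X Y x y * Real.log (condDist μ X Y x y) := by
          refine Finset.sum_congr rfl fun y _ => ?_
          rw [← claim1 x y, Finset.sum_mul]
          refine Finset.sum_congr rfl fun z hz => ?_
          rw [Finset.mem_filter] at hz
          rw [hz.2]
  have hA : ∑ x, ∑ z, jointDist μ X Z x z * Real.log (condDist μ Y Z (m (z, x)) z)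
      = ∑ y, ∑ z, jointDist μ Y Z y z * Real.log (condDist μ Y Z y z) := by
    rw [Finset.sum_comm]
    conv_rhs => rw [Finset.sum_comm]
    refine Finset.sum_congr rfl fun z _ => ?_
    calc ∑ x, jointDist μ X Z x z * Real.log (condDist μ Y Z (m (z, x)) z)
        = ∑ y, ∑ x ∈ Finset.univ.filter (fun x => m (z, x) = y),
            jointDist μ X Z x z * Real.log (condDist μ Y Z (m (z, x)) z) :=
          (fiber_sum _ _).symm
      _ = ∑ y, jointDist μ Y Z y z * Real.log (condDist μ Y Z y z) := by
          refine Finset.sum_congr rfl fun y _ => ?_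
          rw [← claim2 y z, Finset.sum_mul]
          refine Finset.sum_congr rfl fun x hx => ?_
          rw [Finset.mem_filter] at hx
          rw [hx.2]
  rw [hsplit, hA, hB]
  ring
end

section
/- Let F be a map assigning a real number F(X,Y) to every ordered pair of finite random variables defined on a common probability space, and suppose F is continuous and invariant under pullbacks. If (X, Y) is a pair of finite random variables on (Ω, Σ, μ) and (X', Y') is a pair of finite random variables on (Ω', Σ', μ') such that the associated joint distribution functions ϑ : 𝒳 × 𝒴 → [0,1] and ϑ' : 𝒳 × 𝒴 → [0,1] are equal, then F(X, Y) = F(X', Y'). -/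
open MeasureTheory Filter Topology

/-- A continuous, pullback-invariant map on pairs of finite random
variables depends only on the joint distribution function. -/
theorem eq_of_jointDist_eq (F : PairFunctional) (hc : PF.Continuous F)
    (hpb : PF.PullbackInvariant F)
    {Ω Ω' : Type} [MeasurableSpace Ω] [MeasurableSpace Ω']
    (μ : Measure Ω) (μ' : Measure Ω') [IsProbabilityMeasure μ] [IsProbabilityMeasure μ']
    {𝒳 𝒴 : Type} [Fintype 𝒳] [Fintype 𝒴]
    (X : Ω → 𝒳) (Y : Ω → 𝒴) (X' : Ω' → 𝒳) (Y' : Ω' → 𝒴)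
    (hX : ∀ a, MeasurableSet (X ⁻¹' {a})) (hY : ∀ b, MeasurableSet (Y ⁻¹' {b}))
    (hX' : ∀ a, MeasurableSet (X' ⁻¹' {a})) (hY' : ∀ b, MeasurableSet (Y' ⁻¹' {b}))
    (hjoint : ∀ a b,
      jointDist μ ⟨𝒳, inferInstance, X, hX⟩ ⟨𝒴, inferInstance, Y, hY⟩ a b
        = jointDist μ' ⟨𝒳, inferInstance, X', hX'⟩ ⟨𝒴, inferInstance, Y', hY'⟩ a b) :
    F Ω μ ⟨𝒳, inferInstance, X, hX⟩ ⟨𝒴, inferInstance, Y, hY⟩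
      = F Ω' μ' ⟨𝒳, inferInstance, X', hX'⟩ ⟨𝒴, inferInstance, Y', hY'⟩ := by
  letI m : MeasurableSpace (𝒳 × 𝒴) := ⊤
  set π : Ω → 𝒳 × 𝒴 := fun ω => (X ω, Y ω) with hπdef
  set π' : Ω' → 𝒳 × 𝒴 := fun ω => (X' ω, Y' ω) with hπ'def
  have hfibm : ∀ p : 𝒳 × 𝒴, π ⁻¹' {p} = X ⁻¹' {p.1} ∩ Y ⁻¹' {p.2} := by
    rintro ⟨a, b⟩; ext ω; simp [π, Prod.ext_iff]
  have hfibm' : ∀ p : 𝒳 × 𝒴, π' ⁻¹' {p} = X' ⁻¹' {p.1} ∩ Y' ⁻¹' {p.2} := by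
    rintro ⟨a, b⟩; ext ω; simp [π', Prod.ext_iff]
  have hmeasπ : Measurable π := by
    intro s _
    rw [← Set.biUnion_preimage_singleton]
    exact MeasurableSet.biUnion (Set.to_countable s) fun p _ => by
      rw [hfibm p]; exact (hX p.1).inter (hY p.2)
  have hmeasπ' : Measurable π' := by
    intro s _
    rw [← Set.biUnion_preimage_singleton]
    exact MeasurableSet.biUnion (Set.to_countable s) fun p _ => by
      rw [hfibm' p]; exact (hX' p.1).inter (hY' p.2)
  have hfibeq : ∀ p : 𝒳 × 𝒴, μ (π ⁻¹' {p}) = μ' (π' ⁻¹' {p}) := by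
    rintro ⟨a, b⟩
    rw [hfibm, hfibm']
    exact (ENNReal.toReal_eq_toReal_iff' (measure_ne_top μ _) (measure_ne_top μ' _)).mp
      (hjoint a b)
  have hmapeq : μ.map π = μ'.map π' := by
    ext s hs
    rw [Measure.map_apply hmeasπ hs, Measure.map_apply hmeasπ' hs,
      ← Set.biUnion_preimage_singleton π s, ← Set.biUnion_preimage_singleton π' s,
      measure_biUnion (Set.to_countable s)
        (fun p _ q _ hne => Set.disjoint_singleton.mpr hne |>.preimage π)
        (fun p _ => hmeasπ (MeasurableSpace.measurableSet_top)),
      measure_biUnion (Set.to_countable s)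
        (fun p _ q _ hne => Set.disjoint_singleton.mpr hne |>.preimage π')
        (fun p _ => hmeasπ' (MeasurableSpace.measurableSet_top))]
    exact tsum_congr fun p => hfibeq p
  haveI : IsProbabilityMeasure (μ.map π) := Measure.isProbabilityMeasure_map hmeasπ.aemeasurable
  set Pfst : FRV (𝒳 × 𝒴) :=
    ⟨𝒳, inferInstance, Prod.fst, fun _ => MeasurableSpace.measurableSet_top⟩ with hPf
  set Psnd : FRV (𝒳 × 𝒴) :=
    ⟨𝒴, inferInstance, Prod.snd, fun _ => MeasurableSpace.measurableSet_top⟩ with hPs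
  have hmp : MeasurePreserving π μ (μ.map π) := ⟨hmeasπ, rfl⟩
  have hmp' : MeasurePreserving π' μ' (μ.map π) := ⟨hmeasπ', hmapeq.symm⟩
  have h1 := hpb (𝒳 × 𝒴) Ω (μ.map π) μ π hmp Pfst Psnd
  have h2 := hpb (𝒳 × 𝒴) Ω' (μ.map π) μ' π' hmp' Pfst Psnd
  have e1 : Pfst.comap π hmp.measurable = ⟨𝒳, inferInstance, X, hX⟩ := rfl
  have e2 : Psnd.comap π hmp.measurable = ⟨𝒴, inferInstance, Y, hY⟩ := rfl
  have e1' : Pfst.comap π' hmp'.measurable = ⟨𝒳, inferInstance, X', hX'⟩ := rfl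
  have e2' : Psnd.comap π' hmp'.measurable = ⟨𝒴, inferInstance, Y', hY'⟩ := rfl
  rw [e1, e2] at h1
  rw [e1', e2'] at h2
  rw [← h1, ← h2]
end

section
/- Let F be a map assigning a real number F(X,Y) to every ordered pair of finite random variables defined on a common probability space, and suppose F is symmetric and weakly functorial. Then for every finite random variable X with support 𝒳, every bijection f : 𝒳 → 𝒴, and every constant random variable C on the same probability space, F(X,C) - F(f∘X, C) + F(f∘X, f∘X) = F(f∘X, C) - F(X,C) + F(X,X). -/
open MeasureTheory Filter Topology

/-- If `F` is symmetric and weakly functorial, then for every bijection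
`f` and constant random variable `C`,
`F(X,C) - F(f∘X,C) + F(f∘X,f∘X) = F(f∘X,C) - F(X,C) + F(X,X)`. -/
theorem symm_weaklyFunctorial_eq (F : PairFunctional) (hs : PF.Symm F)
    (hw : PF.WeaklyFunctorial F) {Ω : Type} [MeasurableSpace Ω] (μ : Measure Ω)
    [IsProbabilityMeasure μ] (X : FRV Ω) {𝒴 : Type} [Fintype 𝒴]
    (f : X.α → 𝒴) (hf : Function.Bijective f) (C : FRV Ω) (hC : C.IsConstant) :
    F Ω μ X C - F Ω μ (X.map f) C + F Ω μ (X.map f) (X.map f)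
      = F Ω μ (X.map f) C - F Ω μ X C + F Ω μ X X := by
  classical
  set Y := X.map f with hY
  have hpre : ∀ x : X.α, Y.X ⁻¹' {f x} = X.X ⁻¹' {x} := by
    intro x; ext ω
    simp only [hY, FRV.map, Function.comp, Set.mem_preimage, Set.mem_singleton_iff]
    exact ⟨fun h => hf.1 h, fun h => congrArg f h⟩
  have hpmf : ∀ x, Y.pmf μ (f x) = X.pmf μ x := by
    intro x; unfold FRV.pmf; erw [hpre]
  set g : 𝒴 → X.α := fun y => (Equiv.ofBijective f hf).symm y with hg
  have hfg : ∀ y : 𝒴, f (g y) = y := fun y => (Equiv.ofBijective f hf).apply_symm_apply y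
  have hpreY : ∀ y : 𝒴, Y.X ⁻¹' {y} = X.X ⁻¹' {g y} := by
    intro y; rw [← hpre (g y), hfg]
  -- (X, Y, C) is a Markov triangle with mediator (z, x) ↦ f x
  have med1 : IsMediator μ X Y C (fun p => f p.2) := by
    intro z x
    unfold condDist jointDist
    by_cases hx : X.pmf μ x = 0
    · simp [hx]
    · have hy : Y.pmf μ (f x) ≠ 0 := by rw [hpmf]; exact hx
      simp only [hx, hy, if_pos, ne_eq, not_false_eq_true, if_true]
      erw [hpre x, Set.inter_self]
      have : (μ (X.X ⁻¹' {x})).toReal = X.pmf μ x := rfl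
      rw [this, div_self hx, mul_one, hpmf]
  -- (Y, X, C) is a Markov triangle with mediator (z, y) ↦ g y
  have med2 : IsMediator μ Y X C (fun p => g p.2) := by
    intro z y
    unfold condDist jointDist
    by_cases hy : Y.pmf μ y = 0
    · simp [hy]
    · have hx : X.pmf μ (g y) ≠ 0 := by
        erw [← hpmf (g y), hfg]; exact hy
      simp only [hx, hy, if_pos, ne_eq, not_false_eq_true, if_true]
      erw [hpreY y, Set.inter_self]
      have : (μ (X.X ⁻¹' {g y})).toReal = X.pmf μ (g y) := rfl
      have hpy : Y.pmf μ y = X.pmf μ (g y) := by erw [← hpmf (g y), hfg]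
      rw [hpy, this, div_self hx, mul_one]
  have e1 := hw Ω μ X Y C ⟨_, med1⟩
  have e2 := hw Ω μ Y X C ⟨_, med2⟩
  have hsym := hs Ω μ X Y
  linarith
end

section
/- (Faddeev's characterization of Shannon entropy.) Let 𝒮 be a map sending every probability distribution on a finite set to a non-negative real number, and suppose: (i) 𝒮 is continuous, i.e., if pₙ : 𝒳 → [0,1] is a sequence of probability distributions on a finite set 𝒳 converging pointwise to p, then 𝒮(p) = lim_{n→∞} 𝒮(pₙ); (ii) 𝒮(1) = 0 for the unique distribution 1 on a one-element set; (iii) 𝒮(q) = 𝒮(q∘f) for every probability distribution q : 𝒴 → [0,1] and every bijection f : 𝒳 → 𝒴; (iv) 𝒮(⊕_{x∈𝒳} p(x)q^x) = 𝒮(p) + ∑_{x∈𝒳} p(x)𝒮(q^x) for every probability distribution p : 𝒳 → [0,1] on a finite set 𝒳 and every family of finite probability distributions q^x : 𝒴^x → [0,1] indexed by 𝒳, where ⊕_{x∈𝒳} p(x)q^x : ∐_x 𝒴^x → [0,1] is the distribution given by (x̃, y) ↦ p(x̃)q^{x̃}(y). Then there exists a constant c ≥ 0 such that 𝒮(p)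 = c·H(p) for every finite probability distribution p, where H(p) = -∑_x p(x) log p(x) is the Shannon entropy. -/
open MeasureTheory Filter Topology

section FaddeevProof

variable (S : ∀ (𝒳 : Type) [Fintype 𝒳], (𝒳 → ℝ) → ℝ)

private lemma fd_congr {𝒳 : Type} (i₁ i₂ : Fintype 𝒳) (p : 𝒳 → ℝ) :
    @S 𝒳 i₁ p = @S 𝒳 i₂ p := by
  cases Subsingleton.elim i₁ i₂; rfl

private lemma fd_unif_prob (n : ℕ) (hn : 1 ≤ n) :
    IsProbDist (fun _ : Fin n => (n : ℝ)⁻¹) := by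
  have hn0 : (0:ℝ) < n := by exact_mod_cast hn
  constructor
  · intro b; positivity
  · rw [Finset.sum_const, Finset.card_univ, Fintype.card_fin, nsmul_eq_mul,
      mul_inv_cancel₀ hn0.ne']

variable
  (hunit : S PUnit (fun _ => 1) = 0)
  (hbij : ∀ (𝒳 𝒴 : Type) [Fintype 𝒳] [Fintype 𝒴] (q : 𝒴 → ℝ), IsProbDist q →
      ∀ f : 𝒳 → 𝒴, Function.Bijective f → S 𝒴 q = S 𝒳 (q ∘ f))
  (hadd : ∀ (𝒳 : Type) [Fintype 𝒳] (p : 𝒳 → ℝ), IsProbDist p →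
      ∀ (𝒴 : 𝒳 → Type) [∀ x, Fintype (𝒴 x)] (q : ∀ x, 𝒴 x → ℝ),
      (∀ x, IsProbDist (q x)) →
      S (Σ x : 𝒳, 𝒴 x) (fun s => p s.1 * q s.1 s.2)
        = S 𝒳 p + ∑ x, p x * S (𝒴 x) (q x))

include hunit hbij in
/-- S of the unique distribution on `Fin 1` vanishes. -/
private lemma fd_fin_one : S (Fin 1) (fun _ => ((1:ℕ) : ℝ)⁻¹) = 0 := by
  have h1 : (fun _ : Fin 1 => ((1:ℕ) : ℝ)⁻¹) = (fun _ : Fin 1 => (1:ℝ)) := by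
    funext _; norm_num
  rw [h1]
  have hb := hbij PUnit (Fin 1) (fun _ => (1:ℝ))
    ⟨fun _ => by norm_num, by simp⟩ (fun _ => 0)
    ⟨fun a b _ => by cases a; cases b; rfl, fun y => ⟨PUnit.unit, by omega⟩⟩
  rw [hb]
  exact hunit

include hbij hadd in
/-- The key grouping identity: if `p x = k x / N` with `k x ≥ 1` and `∑ k = N`. -/
private lemma fd_group (𝒳 : Type) [Fintype 𝒳] (k : 𝒳 → ℕ) (hk : ∀ x, 1 ≤ k x)
    (N : ℕ) (hN : ∑ x, k x = N) (hN1 : 1 ≤ N) :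
    S (Fin N) (fun _ => (N : ℝ)⁻¹)
      = S 𝒳 (fun x => (k x : ℝ) / N)
        + ∑ x, ((k x : ℝ) / N) * S (Fin (k x)) (fun _ => ((k x : ℕ) : ℝ)⁻¹) := by
  have hN0 : (0:ℝ) < N := by exact_mod_cast hN1
  -- p is a probability distribution
  have hp : IsProbDist (fun x => (k x : ℝ) / N) := by
    constructor
    · intro x; positivity
    · rw [← Finset.sum_div]
      rw [show ∑ x, (k x : ℝ) = (N:ℝ) by exact_mod_cast congrArg Nat.cast hN]
      field_simp
  have hq : ∀ x, IsProbDist (fun _ : Fin (k x) => ((k x : ℕ) : ℝ)⁻¹) :=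
    fun x => fd_unif_prob (k x) (hk x)
  have H := hadd 𝒳 (fun x => (k x : ℝ) / N) hp (fun x => Fin (k x))
    (fun x => fun _ => ((k x : ℕ) : ℝ)⁻¹) hq
  -- the sigma distribution is uniform
  have hdist : (fun s : Σ x : 𝒳, Fin (k x) => ((k s.1 : ℝ) / N) * ((k s.1 : ℕ) : ℝ)⁻¹)
      = (fun _ : Σ x : 𝒳, Fin (k x) => (N : ℝ)⁻¹) := by
    funext s
    have : (0:ℝ) < k s.1 := by exact_mod_cast hk s.1
    field_simp
  rw [hdist] at H
  -- transport along a bijection with Fin N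
  have hcard : Fintype.card (Σ x : 𝒳, Fin (k x)) = N := by
    simp [Fintype.card_sigma, hN]
  let e : (Σ x : 𝒳, Fin (k x)) ≃ Fin N := Fintype.equivFinOfCardEq hcard
  have hb := hbij (Σ x : 𝒳, Fin (k x)) (Fin N) (fun _ => (N : ℝ)⁻¹)
    (fd_unif_prob N hN1) e e.bijective
  have hcomp : ((fun _ : Fin N => (N : ℝ)⁻¹) ∘ e) = (fun _ : Σ x : 𝒳, Fin (k x) => (N : ℝ)⁻¹) :=
    rfl
  rw [hcomp] at hb
  rw [hb, H]

private noncomputable def fdF : ℕ → ℝ := fun n => S (Fin n) (fun _ => ((n : ℕ) : ℝ)⁻¹)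

include hunit hbij in
private lemma fdF_one : fdF S 1 = 0 := fd_fin_one S hunit hbij

include hunit hbij hadd in
private lemma fdF_mul (a b : ℕ) (ha : 1 ≤ a) (hb : 1 ≤ b) :
    fdF S (a * b) = fdF S a + fdF S b := by
  have ha0 : (0:ℝ) < a := by exact_mod_cast ha
  have hb0 : (0:ℝ) < b := by exact_mod_cast hb
  have hG := fd_group S hbij hadd (Fin a) (fun _ => b) (fun _ => hb) (a*b)
    (by simp [Finset.sum_const, Finset.card_univ, mul_comm]) (Nat.one_le_iff_ne_zero.2 (by positivity))
  have h1 : (fun _ : Fin a => ((b:ℕ):ℝ) / (((a*b : ℕ):ℕ):ℝ)) = fun _ : Fin a => ((a:ℕ):ℝ)⁻¹ := by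
    funext _; push_cast; field_simp
  rw [h1] at hG
  have h2 : ∑ _x : Fin a, (((b:ℕ):ℝ) / (((a*b : ℕ):ℕ):ℝ)) * fdF S b = fdF S b := by
    rw [Finset.sum_const, Finset.card_univ, Fintype.card_fin, nsmul_eq_mul]
    push_cast
    field_simp
  rw [show (∑ _x : Fin a, (((b:ℕ):ℝ) / (((a*b : ℕ):ℕ):ℝ))
      * S (Fin b) (fun _ => ((b:ℕ):ℝ)⁻¹)) = fdF S b from h2] at hG
  rw [show S (Fin (a*b)) (fun _ => (((a*b:ℕ):ℕ):ℝ)⁻¹) = fdF S (a*b) from rfl,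
    show S (Fin a) (fun _ : Fin a => ((a:ℕ):ℝ)⁻¹) = fdF S a from rfl] at hG
  linarith [hG]

/-- The two-point distribution `(t, 1-t)`. -/
private def fdPB (t : ℝ) : Bool → ℝ := fun b => cond b t (1 - t)

private lemma fdPB_prob (t : ℝ) (h0 : 0 ≤ t) (h1 : t ≤ 1) : IsProbDist (fdPB t) := by
  constructor
  · intro b; cases b <;> simp [fdPB] <;> linarith
  · simp [Fintype.sum_bool, fdPB]

include hunit hbij hadd in
private lemma fd_dirac_two : S Bool (fdPB 1) = 0 := by
  set dB : Bool → ℝ := fun b => cond b 1 0 with hdBdef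
  have hdBprob : IsProbDist dB := by
    constructor
    · intro b; cases b <;> simp [hdBdef]
    · simp [Fintype.sum_bool, hdBdef]
  have HA := hadd Bool dB hdBprob (fun _ => Bool) (fun _ => dB) (fun _ => hdBprob)
  have hsumA : ∑ b : Bool, dB b * S Bool dB = S Bool dB := by
    rw [Fintype.sum_bool]; simp [hdBdef]
  rw [hsumA] at HA
  set q : ∀ b : Bool, Fin (cond b 1 3) → ℝ := fun b _ => ((cond b 1 3 : ℕ):ℝ)⁻¹ with hqdef
  have hqB : ∀ b, IsProbDist (q b) := by
    intro b; cases b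
    · exact fd_unif_prob 3 (by norm_num)
    · exact fd_unif_prob 1 (by norm_num)
  have HB := hadd Bool dB hdBprob (fun b => Fin (cond b 1 3)) q hqB
  have hsumB : ∑ b : Bool, dB b * S (Fin (cond b 1 3)) (q b) = 0 := by
    rw [Fintype.sum_bool]
    have : S (Fin (cond true 1 3)) (q true) = S (Fin 1) (fun _ => ((1:ℕ):ℝ)⁻¹) := rfl
    rw [this, fd_fin_one S hunit hbij]
    simp [hdBdef]
  rw [hsumB] at HB
  -- the explicit bijection
  set g : (Σ b : Bool, Fin (cond b 1 3)) → (Σ _ : Bool, Bool) := fun s =>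
    match s with
    | ⟨true, _⟩ => ⟨true, true⟩
    | ⟨false, i⟩ =>
        if i.val = 0 then ⟨true, false⟩ else if i.val = 1 then ⟨false, true⟩
        else ⟨false, false⟩ with hgdef
  have hg : Function.Bijective g := by decide
  have hprobSig : IsProbDist (fun s : (Σ _ : Bool, Bool) => dB s.1 * dB s.2) := by
    constructor
    · rintro ⟨b, c⟩
      exact mul_nonneg (hdBprob.1 b) (hdBprob.1 c)
    · rw [← Finset.univ_sigma_univ, Finset.sum_sigma]
      simp [Fintype.sum_bool, hdBdef]
  have hbj := hbij (Σ b : Bool, Fin (cond b 1 3)) (Σ _ : Bool, Bool)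
    (fun s => dB s.1 * dB s.2) hprobSig g hg
  have hcomp : ((fun s : (Σ _ : Bool, Bool) => dB s.1 * dB s.2) ∘ g)
      = (fun s : (Σ b : Bool, Fin (cond b 1 3)) => dB s.1 * q s.1 s.2) := by
    funext ⟨b, i⟩
    cases b
    · show dB (g ⟨false, i⟩).1 * dB (g ⟨false, i⟩).2 = dB false * q false i
      have : g ⟨false, i⟩ = if i.val = 0 then ⟨true, false⟩ else if i.val = 1 then ⟨false, true⟩
          else ⟨false, false⟩ := rfl
      rw [this]
      split_ifs <;> simp [hdBdef]
    · show dB (g ⟨true, i⟩).1 * dB (g ⟨true, i⟩).2 = dB true * q true i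
      have : g ⟨true, i⟩ = ⟨true, true⟩ := rfl
      rw [this]
      simp [hdBdef, hqdef]
  rw [hcomp] at hbj
  have hone : S Bool (fdPB 1) = S Bool dB := by
    congr 1
    funext b; cases b <;> simp [fdPB, hdBdef]
  rw [hone]
  rw [← hbj] at HB
  linarith [HA, HB]

include hunit hbij hadd in
private lemma fdF_succ (n : ℕ) (hn : 1 ≤ n) :
    fdF S (n+1) = S Bool (fdPB ((n:ℝ)/(n+1))) + ((n:ℝ)/(n+1)) * fdF S n := by
  have hn0 : (0:ℝ) < n := by exact_mod_cast hn
  have hn1 : (0:ℝ) < (n:ℝ) + 1 := by linarith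
  have hG := fd_group S hbij hadd Bool (fun b => cond b n 1)
    (by intro b; cases b <;> simp [hn]) (n+1) (by rw [Fintype.sum_bool]; simp) (by omega)
  have h1 : (fun b : Bool => ((cond b n 1 : ℕ):ℝ) / (((n+1:ℕ):ℕ):ℝ)) = fdPB ((n:ℝ)/(n+1)) := by
    funext b; cases b
    · show ((1:ℕ):ℝ) / (((n+1:ℕ):ℕ):ℝ) = 1 - (n:ℝ)/((n:ℝ)+1)
      push_cast
      field_simp
      ring
    · show ((n:ℕ):ℝ) / (((n+1:ℕ):ℕ):ℝ) = (n:ℝ)/((n:ℝ)+1)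
      push_cast
      ring
  rw [h1] at hG
  have h2 : ∑ b : Bool, (((cond b n 1 : ℕ):ℝ) / (((n+1:ℕ):ℕ):ℝ))
      * S (Fin (cond b n 1)) (fun _ => ((cond b n 1 : ℕ):ℝ)⁻¹)
      = ((n:ℝ)/(n+1)) * fdF S n := by
    rw [Fintype.sum_bool]
    have ht : S (Fin (cond true n 1)) (fun _ => ((cond true n 1 : ℕ):ℝ)⁻¹) = fdF S n := rfl
    have hf : S (Fin (cond false n 1)) (fun _ => ((cond false n 1 : ℕ):ℝ)⁻¹) = fdF S 1 := rfl
    rw [ht, hf, fdF_one S hunit hbij]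
    simp only [cond_true, cond_false]
    push_cast
    ring
  rw [h2] at hG
  exact hG
variable
  (hSnn : ∀ (𝒳 : Type) [Fintype 𝒳] (p : 𝒳 → ℝ), IsProbDist p → 0 ≤ S 𝒳 p)
  (hcont : ∀ (𝒳 : Type) [Fintype 𝒳] (pn : ℕ → 𝒳 → ℝ) (p : 𝒳 → ℝ),
      (∀ n, IsProbDist (pn n)) → IsProbDist p →
      (∀ x, Tendsto (fun n => pn n x) atTop (𝓝 (p x))) →
      Tendsto (fun n => S 𝒳 (pn n)) atTop (𝓝 (S 𝒳 p)))

private lemma fdPB_prob_frac (n : ℕ) : IsProbDist (fdPB ((n:ℝ)/(n+1))) := by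
  have h1 : (0:ℝ) < (n:ℝ)+1 := by positivity
  exact fdPB_prob _ (by positivity) (by rw [div_le_one h1]; linarith)

include hunit hbij hadd hcont in
private lemma fd_h_tendsto :
    Tendsto (fun n : ℕ => S Bool (fdPB ((n:ℝ)/(n+1)))) atTop (𝓝 0) := by
  have hlim : ∀ b : Bool, Tendsto (fun n : ℕ => fdPB ((n:ℝ)/(n+1)) b) atTop (𝓝 (fdPB 1 b)) := by
    have key : Tendsto (fun n : ℕ => (n:ℝ)/(n+1)) atTop (𝓝 1) := by
      have h0 : Tendsto (fun n : ℕ => 1 - 1/((n:ℝ)+1)) atTop (𝓝 (1 - 0)) :=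
        tendsto_const_nhds.sub tendsto_one_div_add_atTop_nhds_zero_nat
      rw [sub_zero] at h0
      refine h0.congr (fun n => ?_)
      have : ((n:ℝ)+1) ≠ 0 := by positivity
      field_simp
      ring
    intro b
    cases b
    · have h2 := (tendsto_const_nhds (x := (1:ℝ)) (f := atTop (α := ℕ))).sub key
      rw [sub_self] at h2
      simpa [fdPB] using h2
    · simpa [fdPB] using key
  have := hcont Bool (fun n => fdPB ((n:ℝ)/(n+1))) (fdPB 1) (fun n => fdPB_prob_frac n)
    (fdPB_prob 1 zero_le_one le_rfl) hlim
  rwa [fd_dirac_two S hunit hbij hadd] at this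

include hunit hbij hadd in
private lemma fd_sum_formula (n : ℕ) (hn : 1 ≤ n) :
    (n:ℝ) * fdF S n
      = ∑ k ∈ Finset.Ico 1 n, ((k:ℝ)+1) * S Bool (fdPB ((k:ℝ)/(k+1))) := by
  induction n with
  | zero => omega
  | succ m ih =>
    rcases Nat.lt_or_ge m 1 with hm | hm
    · interval_cases m
      simp [fdF_one S hunit hbij]
    · have hrec := fdF_succ S hunit hbij hadd m hm
      have hm0 : (0:ℝ) < (m:ℝ) + 1 := by positivity
      rw [Finset.sum_Ico_succ_top hm, ← ih hm]
      rw [hrec]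
      push_cast
      field_simp
      ring

include hunit hbij hadd hSnn hcont in
private lemma fd_div_tendsto : Tendsto (fun n : ℕ => fdF S n / n) atTop (𝓝 0) := by
  set h : ℕ → ℝ := fun k => S Bool (fdPB ((k:ℝ)/(k+1))) with hhdef
  have hhnn : ∀ k, 0 ≤ h k := fun k => hSnn Bool _ (fdPB_prob_frac k)
  have hces : Tendsto (fun n : ℕ => (n:ℝ)⁻¹ * ∑ i ∈ Finset.range n, h i) atTop (𝓝 0) :=
    (fd_h_tendsto S hunit hbij hadd hcont).cesaro
  have hFnn : ∀ n : ℕ, 1 ≤ n → 0 ≤ fdF S n :=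
    fun n hn => hSnn (Fin n) _ (fd_unif_prob n hn)
  apply tendsto_of_tendsto_of_tendsto_of_le_of_le' tendsto_const_nhds hces
  · filter_upwards [eventually_ge_atTop 1] with n hn
    exact div_nonneg (hFnn n hn) (by positivity)
  · filter_upwards [eventually_ge_atTop 1] with n hn
    have hn0 : (0:ℝ) < n := by exact_mod_cast hn
    have hsum : (n:ℝ) * fdF S n = ∑ k ∈ Finset.Ico 1 n, ((k:ℝ)+1) * h k :=
      fd_sum_formula S hunit hbij hadd n hn
    have hb1 : ∑ k ∈ Finset.Ico 1 n, ((k:ℝ)+1) * h k ≤ ∑ k ∈ Finset.Ico 1 n, (n:ℝ) * h k := by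
      apply Finset.sum_le_sum
      intro k hk
      rw [Finset.mem_Ico] at hk
      have : (k:ℝ) + 1 ≤ n := by exact_mod_cast hk.2
      exact mul_le_mul_of_nonneg_right this (hhnn k)
    have hb2 : ∑ k ∈ Finset.Ico 1 n, h k ≤ ∑ k ∈ Finset.range n, h k := by
      apply Finset.sum_le_sum_of_subset_of_nonneg
      · intro k hk
        rw [Finset.mem_Ico] at hk
        exact Finset.mem_range.2 hk.2
      · exact fun k _ _ => hhnn k
    rw [← Finset.mul_sum] at hb1
    have : fdF S n / n ≤ (∑ k ∈ Finset.range n, h k) / n := by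
      rw [div_le_div_iff₀ hn0 hn0]
      calc fdF S n * n = (n:ℝ) * fdF S n := by ring
        _ ≤ (n:ℝ) * ∑ k ∈ Finset.Ico 1 n, h k := by rw [hsum]; exact hb1
        _ ≤ (n:ℝ) * ∑ k ∈ Finset.range n, h k := by
            exact mul_le_mul_of_nonneg_left hb2 (le_of_lt hn0)
        _ = (∑ k ∈ Finset.range n, h k) * n := by ring
    calc fdF S n / n ≤ (∑ k ∈ Finset.range n, h k) / n := this
      _ = (n:ℝ)⁻¹ * ∑ i ∈ Finset.range n, h i := by rw [div_eq_inv_mul]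

include hunit hbij hadd hSnn hcont in
private lemma fd_delta_tendsto :
    Tendsto (fun n : ℕ => fdF S (n+1) - fdF S n) atTop (𝓝 0) := by
  have hdiv := fd_div_tendsto S hunit hbij hadd hSnn hcont
  have hdiv1 : Tendsto (fun n : ℕ => fdF S n / ((n:ℝ)+1)) atTop (𝓝 0) := by
    have hFnn : ∀ n : ℕ, 1 ≤ n → 0 ≤ fdF S n :=
      fun n hn => hSnn (Fin n) _ (fd_unif_prob n hn)
    apply tendsto_of_tendsto_of_tendsto_of_le_of_le' tendsto_const_nhds hdiv
    · filter_upwards [eventually_ge_atTop 1] with n hn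
      exact div_nonneg (hFnn n hn) (by positivity)
    · filter_upwards [eventually_ge_atTop 1] with n hn
      have hn0 : (0:ℝ) < n := by exact_mod_cast hn
      exact div_le_div_of_nonneg_left (hFnn n hn) hn0 (by linarith)
  have hh := fd_h_tendsto S hunit hbij hadd hcont
  have := hh.sub hdiv1
  rw [sub_zero] at this
  apply this.congr'
  filter_upwards [eventually_ge_atTop 1] with n hn
  have hrec := fdF_succ S hunit hbij hadd n hn
  have hn1 : ((n:ℝ)+1) ≠ 0 := by positivity
  rw [hrec]
  field_simp
  ring
private lemma fd_erdos (f : ℕ → ℝ) (hnn : ∀ n, 1 ≤ n → 0 ≤ f n)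
    (hmul : ∀ a b, 1 ≤ a → 1 ≤ b → f (a * b) = f a + f b)
    (hdelta : Tendsto (fun n : ℕ => f (n+1) - f n) atTop (𝓝 0)) :
    ∀ n : ℕ, 1 ≤ n → f n = (f 2 / Real.log 2) * Real.log n := by
  have hf1 : f 1 = 0 := by have := hmul 1 1 le_rfl le_rfl; simp at this; linarith
  have hpow : ∀ l : ℕ, 1 ≤ l → ∀ k : ℕ, f (l ^ k) = (k : ℝ) * f l := by
    intro l hl k
    induction k with
    | zero => simpa using hf1
    | succ j ih =>
      rw [pow_succ, hmul _ l (Nat.one_le_iff_ne_zero.2 (pow_ne_zero j (by omega))) hl, ih]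
      push_cast; ring
  have htel : ∀ a b : ℕ, b ≤ a → |f a - f b| ≤ ∑ j ∈ Finset.Ico b a, |f (j+1) - f j| := by
    intro a b hba
    have h1 : ∑ j ∈ Finset.Ico b a, (f (j+1) - f j) = f a - f b := by
      rw [Finset.sum_Ico_eq_sub _ hba, Finset.sum_range_sub (fun i => f i),
        Finset.sum_range_sub (fun i => f i)]
      ring
    rw [← h1]
    exact Finset.abs_sum_le_sum_abs _ _
  -- the cross identity
  have cross : ∀ m l : ℕ, 2 ≤ m → 2 ≤ l → f l * Real.log m = f m * Real.log l := by
    intro m l hm hl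
    have hm1 : (1:ℝ) < m := by exact_mod_cast hm
    have hl1 : (1:ℝ) < l := by exact_mod_cast hl
    have hlogm : 0 < Real.log m := Real.log_pos hm1
    have hlogl : 0 < Real.log l := Real.log_pos hl1
    set r : ℝ := Real.log l / Real.log m with hrdef
    have hr : 0 < r := div_pos hlogl hlogm
    -- Step 1: the key estimate
    have key : ∀ ε : ℝ, 0 < ε → ∃ B : ℝ, 0 ≤ B ∧ ∀ n, 1 ≤ n →
        |f n - (Nat.log m n : ℝ) * f m| ≤ B + (Nat.log m n : ℝ) * ((m:ℝ) * ε) := by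
      intro ε hε
      obtain ⟨K₀, hK₀⟩ := (Metric.tendsto_atTop.1 hdelta) ε hε
      set K := max K₀ 1 with hKdef
      have hK1 : 1 ≤ K := le_max_right _ _
      have hKm : 1 ≤ K * m := by
        calc 1 ≤ K := hK1
          _ ≤ K * m := Nat.le_mul_of_pos_right K (by omega)
      have hDel : ∀ j : ℕ, K ≤ j → |f (j+1) - f j| ≤ ε := by
        intro j hj
        have := hK₀ j (le_trans (le_max_left _ _) hj)
        rw [Real.dist_eq, sub_zero] at this
        exact le_of_lt this
      set B : ℝ := (∑ j ∈ Finset.range (K*m), |f j|) + ((Nat.log m (K*m) : ℝ) + 1) * f m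
        with hBdef
      have hfm : 0 ≤ f m := hnn m (by omega)
      have hB0 : 0 ≤ B := by
        apply add_nonneg
        · exact Finset.sum_nonneg fun j _ => abs_nonneg _
        · positivity
      refine ⟨B, hB0, ?_⟩
      intro n
      induction n using Nat.strong_induction_on with
      | _ n ih =>
        intro hn1
        by_cases hsmall : n < K * m
        · -- base case
          have ht : (Nat.log m n : ℝ) ≤ (Nat.log m (K*m) : ℝ) + 1 := by
            have := Nat.log_mono_right (b := m) (le_of_lt hsmall)
            have h2 : (Nat.log m n : ℝ) ≤ (Nat.log m (K*m) : ℝ) := by exact_mod_cast this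
            linarith
          have h3 : |f n - (Nat.log m n : ℝ) * f m| ≤ |f n| + (Nat.log m n : ℝ) * f m := by
            rw [sub_eq_add_neg]
            refine (abs_add_le _ _).trans ?_
            rw [abs_neg, abs_of_nonneg (mul_nonneg (Nat.cast_nonneg _) hfm)]
          have h4 : |f n| ≤ ∑ j ∈ Finset.range (K*m), |f j| :=
            Finset.single_le_sum (fun j _ => abs_nonneg (f j)) (Finset.mem_range.2 hsmall)
          have h5 : (Nat.log m n : ℝ) * f m ≤ ((Nat.log m (K*m) : ℝ) + 1) * f m :=
            mul_le_mul_of_nonneg_right ht hfm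
          have h6 : (0:ℝ) ≤ (Nat.log m n : ℝ) * ((m:ℝ) * ε) := by positivity
          calc |f n - (Nat.log m n : ℝ) * f m| ≤ |f n| + (Nat.log m n : ℝ) * f m := h3
            _ ≤ B := by rw [hBdef]; exact add_le_add h4 h5
            _ ≤ B + (Nat.log m n : ℝ) * ((m:ℝ) * ε) := by linarith
        · push_neg at hsmall
          set n' := n / m with hn'def
          have hm0 : 0 < m := by omega
          have hmn : m ≤ n := le_trans (Nat.le_mul_of_pos_left m (by omega)) hsmall
          have hn'1 : 1 ≤ n' := (Nat.one_le_div_iff hm0).2 hmn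
          have hn'K : K ≤ n' := (Nat.le_div_iff_mul_le hm0).2 hsmall
          have hlt : n' < n := Nat.div_lt_self (by omega) (by omega)
          have hlog : Nat.log m n = Nat.log m n' + 1 := by
            have h1 : Nat.log m n' = Nat.log m n - 1 := Nat.log_div_base m n
            have h2 : 0 < Nat.log m n := Nat.log_pos (by omega) hmn
            omega
          have hmn' : m * n' ≤ n := by
            rw [hn'def, mul_comm]
            exact Nat.div_mul_le_self n m
          have hmod : n - m * n' < m := by
            have hdm : m * n' + n % m = n := Nat.div_add_mod n m
            have hm2' : n % m < m := Nat.mod_lt n hm0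
            omega
          have hKmn' : K ≤ m * n' := le_trans hn'K (Nat.le_mul_of_pos_left n' hm0)
          -- telescoping bound
          have hstep : |f n - f (m * n')| ≤ (m:ℝ) * ε := by
            refine (htel n (m*n') hmn').trans ?_
            have hcard : ∀ j ∈ Finset.Ico (m*n') n, |f (j+1) - f j| ≤ ε := by
              intro j hj
              rw [Finset.mem_Ico] at hj
              exact hDel j (le_trans hKmn' hj.1)
            calc ∑ j ∈ Finset.Ico (m*n') n, |f (j+1) - f j|
                ≤ ∑ _j ∈ Finset.Ico (m*n') n, ε := Finset.sum_le_sum hcard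
              _ = ((n - m*n' : ℕ) : ℝ) * ε := by
                  rw [Finset.sum_const, Nat.card_Ico, nsmul_eq_mul]
              _ ≤ (m:ℝ) * ε := by
                  have : ((n - m*n' : ℕ) : ℝ) ≤ (m:ℝ) := by exact_mod_cast le_of_lt hmod
                  exact mul_le_mul_of_nonneg_right this (le_of_lt hε)
          have hsplit : f (m * n') = f m + f n' := hmul m n' (by omega) hn'1
          have hIH := ih n' hlt hn'1
          have hrw : f n - (Nat.log m n : ℝ) * f m
              = (f n - f (m * n')) + (f n' - (Nat.log m n' : ℝ) * f m) := by
            rw [hsplit, hlog]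
            push_cast
            ring
          calc |f n - (Nat.log m n : ℝ) * f m|
              ≤ |f n - f (m * n')| + |f n' - (Nat.log m n' : ℝ) * f m| := by
                rw [hrw]; exact abs_add_le _ _
            _ ≤ (m:ℝ) * ε + (B + (Nat.log m n' : ℝ) * ((m:ℝ) * ε)) := add_le_add hstep hIH
            _ = B + ((Nat.log m n' : ℝ) + 1) * ((m:ℝ) * ε) := by ring
            _ = B + (Nat.log m n : ℝ) * ((m:ℝ) * ε) := by rw [hlog]; push_cast; ring
    -- Step 2: t k / k → r
    set t : ℕ → ℕ := fun k => Nat.log m (l ^ k) with htdef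
    have hub : ∀ k : ℕ, (t k : ℝ) * Real.log m ≤ (k : ℝ) * Real.log l := by
      intro k
      have h1 : (m:ℕ) ^ (t k) ≤ l ^ k :=
        Nat.pow_log_le_self m (pow_ne_zero k (by omega))
      have h2 : ((m:ℝ)) ^ (t k) ≤ ((l:ℝ)) ^ k := by exact_mod_cast h1
      have h3 := Real.log_le_log (by positivity) h2
      rwa [Real.log_pow, Real.log_pow] at h3
    have hlb : ∀ k : ℕ, (k : ℝ) * Real.log l ≤ ((t k : ℝ) + 1) * Real.log m := by
      intro k
      have h1 : l ^ k < m ^ (t k + 1) := Nat.lt_pow_succ_log_self (by omega) _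
      have h2 : ((l:ℝ)) ^ k ≤ ((m:ℝ)) ^ (t k + 1) := by exact_mod_cast le_of_lt h1
      have h3 := Real.log_le_log (by positivity) h2
      rw [Real.log_pow, Real.log_pow] at h3
      exact_mod_cast h3
    have hts : Tendsto (fun k : ℕ => (t k : ℝ) / k) atTop (𝓝 r) := by
      apply tendsto_of_tendsto_of_tendsto_of_le_of_le'
        (g := fun k : ℕ => r - 1/(k:ℝ)) (h := fun _ : ℕ => r)
      · have : Tendsto (fun k : ℕ => r - 1/(k:ℝ)) atTop (𝓝 (r - 0)) :=
          tendsto_const_nhds.sub (tendsto_const_div_atTop_nhds_zero_nat 1)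
        rwa [sub_zero] at this
      · exact tendsto_const_nhds
      · filter_upwards [eventually_ge_atTop 1] with k hk
        have hk0 : (0:ℝ) < k := by exact_mod_cast hk
        have h4 : r * k ≤ (t k : ℝ) + 1 := by
          rw [hrdef, div_mul_eq_mul_div, div_le_iff₀ hlogm]
          calc Real.log l * k = (k:ℝ) * Real.log l := by ring
            _ ≤ ((t k : ℝ) + 1) * Real.log m := hlb k
        rw [le_div_iff₀ hk0]
        have h5 : (r - 1/(k:ℝ)) * k = r * k - 1 := by field_simp
        rw [h5]
        linarith
      · filter_upwards [eventually_ge_atTop 1] with k hk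
        have hk0 : (0:ℝ) < k := by exact_mod_cast hk
        have h4 : (t k : ℝ) ≤ r * k := by
          rw [hrdef, div_mul_eq_mul_div, le_div_iff₀ hlogm]
          calc (t k : ℝ) * Real.log m ≤ (k:ℝ) * Real.log l := hub k
            _ = Real.log l * k := by ring
        rw [div_le_iff₀ hk0]
        exact h4
    -- Step 3: conclude f l = r * f m
    have habs : ∀ ε : ℝ, 0 < ε → |f l - r * f m| ≤ (r * (m:ℝ)) * ε := by
      intro ε hε
      obtain ⟨B, hB0, hB⟩ := key ε hε
      have hineq : ∀ k : ℕ, 1 ≤ k →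
          |f l - ((t k : ℝ)/(k:ℝ)) * f m| ≤ B/(k:ℝ) + ((t k : ℝ)/(k:ℝ)) * ((m:ℝ) * ε) := by
        intro k hk
        have hk0 : (0:ℝ) < k := by exact_mod_cast hk
        have h1 := hB (l ^ k) (Nat.one_le_iff_ne_zero.2 (pow_ne_zero k (by omega)))
        rw [hpow l (by omega) k] at h1
        have h1' : |(k:ℝ) * f l - (t k : ℝ) * f m| ≤ B + (t k : ℝ) * ((m:ℝ) * ε) := h1
        have h2 : f l - ((t k:ℝ)/(k:ℝ)) * f m = ((k:ℝ) * f l - (t k : ℝ) * f m) / k := by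
          field_simp
        rw [h2, abs_div, abs_of_pos hk0]
        calc |(k:ℝ) * f l - (t k:ℝ) * f m| / k
            ≤ (B + (t k : ℝ) * ((m:ℝ) * ε)) / k := by
              exact (div_le_div_iff_of_pos_right hk0).2 h1'
          _ = B/(k:ℝ) + ((t k:ℝ)/(k:ℝ)) * ((m:ℝ) * ε) := by
              rw [add_div]; ring
      have hL : Tendsto (fun k : ℕ => |f l - ((t k:ℝ)/(k:ℝ)) * f m|) atTop
          (𝓝 |f l - r * f m|) :=
        (tendsto_const_nhds.sub (hts.mul_const (f m))).abs
      have hR : Tendsto (fun k : ℕ => B/(k:ℝ) + ((t k:ℝ)/(k:ℝ)) * ((m:ℝ) * ε)) atTop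
          (𝓝 (0 + r * ((m:ℝ) * ε))) :=
        (tendsto_const_div_atTop_nhds_zero_nat B).add (hts.mul_const _)
      have hle := le_of_tendsto_of_tendsto hL hR ?_
      · calc |f l - r * f m| ≤ 0 + r * ((m:ℝ) * ε) := hle
          _ = (r * (m:ℝ)) * ε := by ring
      · filter_upwards [eventually_ge_atTop 1] with k hk
        exact hineq k hk
    have hflrm : f l = r * f m := by
      have hzero : |f l - r * f m| ≤ 0 := by
        by_contra hpos
        push_neg at hpos
        have hrm : 0 < r * (m:ℝ) := by positivity
        have h6 := habs (|f l - r * f m| / (2 * (r * (m:ℝ)))) (by positivity)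
        have h7 : (r * (m:ℝ)) * (|f l - r * f m| / (2 * (r * (m:ℝ))))
            = |f l - r * f m| / 2 := by field_simp
        rw [h7] at h6
        linarith
      have h8 : |f l - r * f m| = 0 := le_antisymm hzero (abs_nonneg _)
      have := abs_eq_zero.1 h8
      linarith
    rw [hflrm, hrdef]
    field_simp
  intro n hn
  rcases eq_or_lt_of_le hn with h1 | h2
  · rw [← h1]
    simp [hf1]
  · have hn2 : 2 ≤ n := h2
    have hc := cross 2 n le_rfl hn2
    push_cast at hc
    have hlog2 : Real.log 2 ≠ 0 := ne_of_gt (Real.log_pos one_lt_two)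
    field_simp
    linarith [hc]
include hunit hbij hadd hSnn hcont in
private lemma fdF_log : ∃ c : ℝ, 0 ≤ c ∧ ∀ n : ℕ, 1 ≤ n → fdF S n = c * Real.log n := by
  refine ⟨fdF S 2 / Real.log 2, ?_, ?_⟩
  · exact div_nonneg (hSnn (Fin 2) _ (fd_unif_prob 2 (by norm_num)))
      (Real.log_nonneg one_le_two)
  · exact fd_erdos (fdF S) (fun n hn => hSnn (Fin n) _ (fd_unif_prob n hn))
      (fun a b ha hb => fdF_mul S hunit hbij hadd a b ha hb)
      (fd_delta_tendsto S hunit hbij hadd hSnn hcont)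

include hbij hadd in
private lemma fd_rational (c : ℝ) (hc : ∀ n : ℕ, 1 ≤ n → fdF S n = c * Real.log n)
    (𝒳 : Type) [Fintype 𝒳] (k : 𝒳 → ℕ) (hk : ∀ x, 1 ≤ k x)
    (N : ℕ) (hN : ∑ x, k x = N) (hN1 : 1 ≤ N) :
    S 𝒳 (fun x => (k x : ℝ) / N) = c * entropyOfDist (fun x => (k x : ℝ) / N) := by
  have hNpos : (0:ℝ) < N := by exact_mod_cast hN1
  have hsump : ∑ x, (k x : ℝ) / N = 1 := by
    rw [← Finset.sum_div, show ∑ x, (k x:ℝ) = (N:ℝ) by exact_mod_cast congrArg Nat.cast hN]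
    field_simp
  have hG : fdF S N = S 𝒳 (fun x => (k x:ℝ)/N)
      + ∑ x, ((k x:ℝ)/N) * fdF S (k x) := fd_group S hbij hadd 𝒳 k hk N hN hN1
  rw [hc N hN1] at hG
  have hsum : ∑ x, ((k x:ℝ)/N) * fdF S (k x)
      = c * ∑ x, ((k x:ℝ)/N) * Real.log (k x) := by
    rw [Finset.mul_sum]
    exact Finset.sum_congr rfl (fun x _ => by rw [hc (k x) (hk x)]; ring)
  rw [hsum] at hG
  have e2 : ∑ x, ((k x:ℝ)/N) * Real.log ((k x:ℝ)/N)
      = ∑ x, ((k x:ℝ)/N) * Real.log (k x) - Real.log N := by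
    have hcg : ∀ x ∈ Finset.univ, ((k x:ℝ)/N) * Real.log ((k x:ℝ)/N)
        = ((k x:ℝ)/N) * Real.log (k x) - ((k x:ℝ)/N) * Real.log N := by
      intro x _
      have hkx : (0:ℝ) < (k x : ℝ) := by exact_mod_cast hk x
      rw [Real.log_div hkx.ne' hNpos.ne']
      ring
    rw [Finset.sum_congr rfl hcg, Finset.sum_sub_distrib, ← Finset.sum_mul, hsump, one_mul]
  simp only [entropyOfDist]
  rw [e2]
  linarith [hG]

end FaddeevProof

theorem faddeev' (S : ∀ (𝒳 : Type) [Fintype 𝒳], (𝒳 → ℝ) → ℝ)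
    (hnn : ∀ (𝒳 : Type) [Fintype 𝒳] (p : 𝒳 → ℝ), IsProbDist p → 0 ≤ S 𝒳 p)
    (hcont : ∀ (𝒳 : Type) [Fintype 𝒳] (pn : ℕ → 𝒳 → ℝ) (p : 𝒳 → ℝ),
      (∀ n, IsProbDist (pn n)) → IsProbDist p →
      (∀ x, Tendsto (fun n => pn n x) atTop (𝓝 (p x))) →
      Tendsto (fun n => S 𝒳 (pn n)) atTop (𝓝 (S 𝒳 p)))
    (hunit : S PUnit (fun _ => 1) = 0)
    (hbij : ∀ (𝒳 𝒴 : Type) [Fintype 𝒳] [Fintype 𝒴] (q : 𝒴 → ℝ), IsProbDist q →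
      ∀ f : 𝒳 → 𝒴, Function.Bijective f → S 𝒴 q = S 𝒳 (q ∘ f))
    (hadd : ∀ (𝒳 : Type) [Fintype 𝒳] (p : 𝒳 → ℝ), IsProbDist p →
      ∀ (𝒴 : 𝒳 → Type) [∀ x, Fintype (𝒴 x)] (q : ∀ x, 𝒴 x → ℝ),
      (∀ x, IsProbDist (q x)) →
      S (Σ x : 𝒳, 𝒴 x) (fun s => p s.1 * q s.1 s.2)
        = S 𝒳 p + ∑ x, p x * S (𝒴 x) (q x)) :
    ∃ c : ℝ, 0 ≤ c ∧ ∀ (𝒳 : Type) [Fintype 𝒳] (p : 𝒳 → ℝ), IsProbDist p →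
      S 𝒳 p = c * entropyOfDist p := by
  classical
  obtain ⟨c, hc0, hc⟩ := fdF_log S hunit hbij hadd hnn hcont
  refine ⟨c, hc0, ?_⟩
  intro 𝒳 _ p hp
  set k : ℕ → 𝒳 → ℕ := fun M x => ⌊(M:ℝ) * p x⌋₊ + 1 with hkdef
  set N : ℕ → ℕ := fun M => ∑ x, k M x with hNdef
  have hk1 : ∀ M x, 1 ≤ k M x := fun M x => Nat.le_add_left 1 _
  have hXne : Nonempty 𝒳 := by
    by_contra h
    rw [not_nonempty_iff] at h
    have h2 := hp.2
    rw [Finset.univ_eq_empty, Finset.sum_empty] at h2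
    norm_num at h2
  obtain ⟨x₀⟩ := hXne
  have hN1 : ∀ M, 1 ≤ N M := by
    intro M
    calc 1 ≤ k M x₀ := hk1 M x₀
      _ ≤ ∑ x, k M x := Finset.single_le_sum (fun x _ => Nat.zero_le _) (Finset.mem_univ x₀)
  set q : ℕ → 𝒳 → ℝ := fun M x => (k M x : ℝ) / (N M) with hqdef
  have hqprob : ∀ M, IsProbDist (q M) := by
    intro M
    have hNp : (0:ℝ) < N M := by exact_mod_cast hN1 M
    constructor
    · intro x
      positivity
    · rw [hqdef, ← Finset.sum_div,
        show ∑ x, (k M x : ℝ) = ((N M : ℕ):ℝ) by exact_mod_cast rfl]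
      field_simp
  have hqS : ∀ M, S 𝒳 (q M) = c * entropyOfDist (q M) := fun M =>
    fd_rational S hbij hadd c hc 𝒳 (k M) (hk1 M) (N M) rfl (hN1 M)
  -- pointwise convergence
  have step1 : ∀ x, Tendsto (fun M : ℕ => (k M x : ℝ) / M) atTop (𝓝 (p x)) := by
    intro x
    have hp0 : 0 ≤ p x := hp.1 x
    apply tendsto_of_tendsto_of_tendsto_of_le_of_le'
      (g := fun _ : ℕ => p x) (h := fun M : ℕ => p x + 1/(M:ℝ))
    · exact tendsto_const_nhds
    · have : Tendsto (fun M : ℕ => p x + 1/(M:ℝ)) atTop (𝓝 (p x + 0)) :=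
        tendsto_const_nhds.add (tendsto_const_div_atTop_nhds_zero_nat 1)
      rwa [add_zero] at this
    · filter_upwards [eventually_ge_atTop 1] with M hM
      have hM0 : (0:ℝ) < M := by exact_mod_cast hM
      rw [le_div_iff₀ hM0]
      have h1 : (M:ℝ) * p x < ((k M x : ℕ):ℝ) := by
        have := Nat.lt_floor_add_one ((M:ℝ) * p x)
        simp only [hkdef]
        push_cast
        push_cast at this
        linarith
      linarith [mul_comm (p x) (M:ℝ)]
    · filter_upwards [eventually_ge_atTop 1] with M hM
      have hM0 : (0:ℝ) < M := by exact_mod_cast hM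
      rw [div_le_iff₀ hM0]
      have h1 : ((k M x : ℕ):ℝ) ≤ (M:ℝ) * p x + 1 := by
        have := Nat.floor_le (show (0:ℝ) ≤ (M:ℝ) * p x by positivity)
        simp only [hkdef]
        push_cast
        linarith
      calc ((k M x : ℕ):ℝ) ≤ (M:ℝ) * p x + 1 := h1
        _ ≤ (p x + 1/(M:ℝ)) * M := by field_simp; ring_nf; linarith [mul_comm (p x) (M:ℝ)]
  have step2 : Tendsto (fun M : ℕ => (N M : ℝ) / M) atTop (𝓝 1) := by
    have h1 : Tendsto (fun M : ℕ => ∑ x, (k M x : ℝ)/M) atTop (𝓝 (∑ x, p x)) :=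
      tendsto_finset_sum _ (fun x _ => step1 x)
    rw [hp.2] at h1
    apply h1.congr
    intro M
    rw [← Finset.sum_div]
    congr 1
    exact_mod_cast rfl
  have hconv : ∀ x, Tendsto (fun M : ℕ => q M x) atTop (𝓝 (p x)) := by
    intro x
    have := (step1 x).div step2 one_ne_zero
    rw [div_one] at this
    apply this.congr'
    filter_upwards [eventually_ge_atTop 1] with M hM
    have hM0 : (0:ℝ) < M := by exact_mod_cast hM
    have hNp : (0:ℝ) < N M := by exact_mod_cast hN1 M
    rw [hqdef]
    simp only [Pi.div_apply]
    field_simp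
  have h1 : Tendsto (fun M => S 𝒳 (q M)) atTop (𝓝 (S 𝒳 p)) :=
    hcont 𝒳 q p hqprob hp hconv
  have hent : Tendsto (fun M => entropyOfDist (q M)) atTop (𝓝 (entropyOfDist p)) := by
    simp only [entropyOfDist]
    apply Tendsto.neg
    apply tendsto_finset_sum
    intro x _
    have := (Real.continuous_mul_log.continuousAt).tendsto.comp (hconv x)
    exact this
  have h2 : Tendsto (fun M => c * entropyOfDist (q M)) atTop (𝓝 (c * entropyOfDist p)) :=
    hent.const_mul c
  have h1' : Tendsto (fun M => c * entropyOfDist (q M)) atTop (𝓝 (S 𝒳 p)) :=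
    h1.congr (fun M => hqS M)
  exact tendsto_nhds_unique h1' h2

/-- Faddeev's characterization of Shannon entropy: a continuous,
bijection-invariant, strongly additive non-negative map on finite probability
distributions which vanishes on the one-point distribution is a non-negative multiple
of the Shannon entropy. -/
theorem faddeev (S : ∀ (𝒳 : Type) [Fintype 𝒳], (𝒳 → ℝ) → ℝ)
    (hnn : ∀ (𝒳 : Type) [Fintype 𝒳] (p : 𝒳 → ℝ), IsProbDist p → 0 ≤ S 𝒳 p)
    (hcont : ∀ (𝒳 : Type) [Fintype 𝒳] (pn : ℕ → 𝒳 → ℝ) (p : 𝒳 → ℝ),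
      (∀ n, IsProbDist (pn n)) → IsProbDist p →
      (∀ x, Tendsto (fun n => pn n x) atTop (𝓝 (p x))) →
      Tendsto (fun n => S 𝒳 (pn n)) atTop (𝓝 (S 𝒳 p)))
    (hunit : S PUnit (fun _ => 1) = 0)
    (hbij : ∀ (𝒳 𝒴 : Type) [Fintype 𝒳] [Fintype 𝒴] (q : 𝒴 → ℝ), IsProbDist q →
      ∀ f : 𝒳 → 𝒴, Function.Bijective f → S 𝒴 q = S 𝒳 (q ∘ f))
    (hadd : ∀ (𝒳 : Type) [Fintype 𝒳] (p : 𝒳 → ℝ), IsProbDist p →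
      ∀ (𝒴 : 𝒳 → Type) [∀ x, Fintype (𝒴 x)] (q : ∀ x, 𝒴 x → ℝ),
      (∀ x, IsProbDist (q x)) →
      S (Σ x : 𝒳, 𝒴 x) (fun s => p s.1 * q s.1 s.2)
        = S 𝒳 p + ∑ x, p x * S (𝒴 x) (q x)) :
    ∃ c : ℝ, 0 ≤ c ∧ ∀ (𝒳 : Type) [Fintype 𝒳] (p : 𝒳 → ℝ), IsProbDist p →
      S 𝒳 p = c * entropyOfDist p :=
  faddeev' S hnn hcont hunit hbij hadd
end

section
/- Let F be a map assigning a real number F(X,Y) to every ordered pair of finite random variables defined on a common probability space, and suppose F is symmetric, weakly functorial, and satisfies F(X,C) = 0 for every constant random variable C. Then for every pair (X, Y) of finite random variables with supports 𝒳, 𝒴 and all bijections f : 𝒳 → 𝒳' and g : 𝒴 → 𝒴', F(X, Y) = F(f∘X, g∘Y). -/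
open MeasureTheory Filter Topology

section Aux

variable {Ω : Type} [MeasurableSpace Ω]

lemma FRV.map_preimage (X : FRV Ω) {β : Type} [Fintype β]
    (f : X.α → β) (hf : Function.Bijective f) (y : β) :
    (X.map f).X ⁻¹' {y} = X.X ⁻¹' {(Equiv.ofBijective f hf).symm y} := by
  ext ω
  simp only [FRV.map, Set.mem_preimage, Set.mem_singleton_iff, Function.comp_apply]
  constructor
  · rintro rfl
    exact ((Equiv.ofBijective f hf).symm_apply_apply _).symm
  · intro h
    rw [h]
    exact (Equiv.ofBijective f hf).apply_symm_apply y

lemma pmf_zero_joint {μ : Measure Ω} [IsProbabilityMeasure μ] {Z X : FRV Ω}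
    {z : Z.α} {x : X.α} (h : X.pmf μ x = 0) : jointDist μ Z X z x = 0 := by
  have hfin : μ (X.X ⁻¹' {x}) ≠ ⊤ := measure_ne_top μ _
  have h0 : μ (X.X ⁻¹' {x}) = 0 := by
    have := ENNReal.toReal_eq_zero_iff (μ (X.X ⁻¹' {x}))
    rw [FRV.pmf] at h
    rcases this.mp h with h' | h'
    · exact h'
    · exact absurd h' hfin
  have : μ (Z.X ⁻¹' {z} ∩ X.X ⁻¹' {x}) = 0 :=
    measure_mono_null Set.inter_subset_right h0
  simp [jointDist, this]

lemma markov_map (μ : Measure Ω) [IsProbabilityMeasure μ]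
    (Z X : FRV Ω) {β : Type} [Fintype β] (f : X.α → β) (hf : Function.Bijective f) :
    IsMarkovTriangle μ Z X (X.map f) := by
  set e := Equiv.ofBijective f hf with he
  refine ⟨fun p => e.symm p.1, ?_⟩
  intro y z
  have hpre := FRV.map_preimage X f hf y
  have hpre' : (X.map f).X ⁻¹' {y} = X.X ⁻¹' {e.symm y} := hpre
  have hjoint : jointDist μ Z (X.map f) z y = jointDist μ Z X z (e.symm y) := by
    simp only [jointDist]; rw [hpre']
  have hjoint2 : jointDist μ X (X.map f) (e.symm y) y = X.pmf μ (e.symm y) := by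
    simp only [jointDist, FRV.pmf]; rw [hpre', Set.inter_self]
  by_cases hp : X.pmf μ (e.symm y) = 0
  · have hZX : jointDist μ Z X z (e.symm y) = 0 := pmf_zero_joint hp
    have hL : condDist μ Z (X.map f) z y = 0 := by
      simp [condDist, hjoint, hZX]
    have hR : condDist μ Z X z (e.symm y) = 0 := by
      simp [condDist, hZX]
    rw [hL, hR, mul_zero]
  · have hmid : condDist μ X (X.map f) (e.symm y) y = 1 := by
      simp [condDist, hp, hjoint2]
    rw [hmid, one_mul]
    simp [condDist, hjoint]

/-- A constant random variable on any space. -/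
def constFRV (Ω : Type) [MeasurableSpace Ω] : FRV Ω where
  α := PUnit
  fintype := inferInstance
  X := fun _ => PUnit.unit
  meas := fun a => by
    have : (fun _ : Ω => PUnit.unit) ⁻¹' {a} = Set.univ := by
      ext ω; simp
    rw [this]; exact MeasurableSet.univ

lemma constFRV_isConstant : (constFRV Ω).IsConstant := fun a b => rfl

lemma F_map_self (F : PairFunctional) (hs : PF.Symm F)
    (hw : PF.WeaklyFunctorial F) (hv : PF.VanishesOnConstants F)
    (μ : Measure Ω) [IsProbabilityMeasure μ] (X : FRV Ω)
    {β : Type} [Fintype β] (f : X.α → β) (hf : Function.Bijective f) :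
    F Ω μ X (X.map f) = F Ω μ X X := by
  have h := hw Ω μ (constFRV Ω) X (X.map f) (markov_map μ (constFRV Ω) X f hf)
  have h1 : F Ω μ (constFRV Ω) (X.map f) = 0 := by
    rw [hs]; exact hv Ω μ _ _ constFRV_isConstant
  have h2 : F Ω μ (constFRV Ω) X = 0 := by
    rw [hs]; exact hv Ω μ _ _ constFRV_isConstant
  rw [h1, h2] at h
  linarith

lemma F_map_right (F : PairFunctional) (hs : PF.Symm F)
    (hw : PF.WeaklyFunctorial F) (hv : PF.VanishesOnConstants F)
    (μ : Measure Ω) [IsProbabilityMeasure μ] (Z X : FRV Ω)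
    {β : Type} [Fintype β] (f : X.α → β) (hf : Function.Bijective f) :
    F Ω μ Z (X.map f) = F Ω μ Z X := by
  have h := hw Ω μ Z X (X.map f) (markov_map μ Z X f hf)
  rw [F_map_self F hs hw hv μ X f hf] at h
  linarith

end Aux

/-- If `F` is symmetric, weakly functorial and vanishes on constants, then
`F(X,Y) = F(f∘X, g∘Y)` for all bijections `f`, `g`. -/
theorem invariance_under_bijections (F : PairFunctional) (hs : PF.Symm F)
    (hw : PF.WeaklyFunctorial F) (hv : PF.VanishesOnConstants F)
    {Ω : Type} [MeasurableSpace Ω] (μ : Measure Ω) [IsProbabilityMeasure μ]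
    (X Y : FRV Ω) {𝒳' 𝒴' : Type} [Fintype 𝒳'] [Fintype 𝒴']
    (f : X.α → 𝒳') (g : Y.α → 𝒴')
    (hf : Function.Bijective f) (hg : Function.Bijective g) :
    F Ω μ X Y = F Ω μ (X.map f) (Y.map g) := by
  calc F Ω μ X Y = F Ω μ X (Y.map g) := (F_map_right F hs hw hv μ X Y g hg).symm
    _ = F Ω μ (Y.map g) X := hs Ω μ _ _
    _ = F Ω μ (Y.map g) (X.map f) := (F_map_right F hs hw hv μ (Y.map g) X f hf).symm
    _ = F Ω μ (X.map f) (Y.map g) := hs Ω μ _ _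
end

section
/- Let F be a map assigning a non-negative real number F(X,Y) to every ordered pair of finite random variables defined on a common probability space, and suppose F is continuous, strongly additive, symmetric, weakly functorial, invariant under pullbacks, and satisfies F(X,C) = 0 for every constant random variable C. Then for every pair (X, Y) of finite random variables, F(X, 𝒫(X,Y)) = F(X, X) and F(𝒫(X,Y), Y) = F(Y, Y). -/
open MeasureTheory Filter Topology

lemma markov_triangle_const {Ω : Type} [MeasurableSpace Ω] (μ : Measure Ω)
    [IsProbabilityMeasure μ] (W V : FRV Ω) (g : W.α → V.α)
    (hsub : ∀ w, W.X ⁻¹' {w} ⊆ V.X ⁻¹' {g w}) :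
    IsMarkovTriangle μ W V (W.map (fun _ => (() : Unit))) := by
  refine ⟨fun q => g q.2, ?_⟩
  intro z w
  have hCuniv : (W.map (fun _ => (() : Unit))).X ⁻¹' {z} = Set.univ := by
    ext ω
    simp only [FRV.map, Set.mem_preimage, Set.mem_singleton_iff, Set.mem_univ, iff_true,
      Function.comp_apply]
    rfl
  have hWV : W.X ⁻¹' {w} ∩ V.X ⁻¹' {g w} = W.X ⁻¹' {w} :=
    Set.inter_eq_left.mpr (hsub w)
  by_cases hw : W.pmf μ w = 0
  · have h3 : condDist μ W V w (g w) = 0 := by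
      simp [condDist, hw]
    simp [condDist, hw, h3]
  · have hle : W.pmf μ w ≤ V.pmf μ (g w) := by
      unfold FRV.pmf
      exact ENNReal.toReal_mono (measure_ne_top μ _) (measure_mono (hsub w))
    have hv : V.pmf μ (g w) ≠ 0 := by
      intro h
      have : (0:ℝ) ≤ W.pmf μ w := ENNReal.toReal_nonneg
      exact hw (le_antisymm (h ▸ hle) this)
    have e1 : condDist μ W (W.map (fun _ => (() : Unit))) w z = 1 := by
      simp only [condDist, jointDist, hCuniv, Set.inter_univ, FRV.pmf, ne_eq]
      rw [if_pos (by simpa [FRV.pmf] using hw)]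
      exact div_self hw
    have e2 : condDist μ V (W.map (fun _ => (() : Unit))) (g w) z = 1 := by
      simp only [condDist, jointDist, hCuniv, Set.inter_univ, FRV.pmf, ne_eq]
      rw [if_pos (by simpa [FRV.pmf] using hv)]
      exact div_self hv
    have e3 : condDist μ W V w (g w) = 1 := by
      simp only [condDist, jointDist, hWV, FRV.pmf, ne_eq]
      rw [if_pos (by simpa [FRV.pmf] using hw)]
      exact div_self hw
    rw [e1, e2, e3]; ring

/-- If `F` is a non-negative, continuous, strongly additive, symmetric,
weakly functorial, pullback-invariant map on pairs of finite random variables which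
vanishes on constants, then `F(X, 𝒫(X,Y)) = F(X,X)` and `F(𝒫(X,Y), Y) = F(Y,Y)`. -/
theorem F_prod_eq_diag (F : PairFunctional) (h0 : PF.Nonneg F)
    (h1 : PF.Continuous F) (h2 : PF.StronglyAdditive F) (h3 : PF.Symm F)
    (h4 : PF.WeaklyFunctorial F) (h5 : PF.PullbackInvariant F)
    (h6 : PF.VanishesOnConstants F)
    {Ω : Type} [MeasurableSpace Ω] (μ : Measure Ω) [IsProbabilityMeasure μ]
    (X Y : FRV Ω) :
    F Ω μ X (X.prod Y) = F Ω μ X X ∧ F Ω μ (X.prod Y) Y = F Ω μ Y Y := by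
  classical
  set P := X.prod Y with hP
  have hsubX : ∀ w : P.α, P.X ⁻¹' {w} ⊆ X.X ⁻¹' {w.1} := by
    intro w ω hω
    simp only [Set.mem_preimage, Set.mem_singleton_iff] at hω ⊢
    exact congrArg Prod.fst hω
  have hsubY : ∀ w : P.α, P.X ⁻¹' {w} ⊆ Y.X ⁻¹' {w.2} := by
    intro w ω hω
    simp only [Set.mem_preimage, Set.mem_singleton_iff] at hω ⊢
    exact congrArg Prod.snd hω
  have hmtX := markov_triangle_const μ P X (fun w => w.1) hsubX
  have hmtY := markov_triangle_const μ P Y (fun w => w.2) hsubY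
  set C := P.map (fun _ => (() : Unit)) with hCdef
  have hC : C.IsConstant := fun a b => rfl
  have e1 := h4 Ω μ P X C hmtX
  have e2 := h4 Ω μ P Y C hmtY
  rw [h6 Ω μ P C hC, h6 Ω μ X C hC] at e1
  rw [h6 Ω μ P C hC, h6 Ω μ Y C hC] at e2
  constructor
  · rw [h3 Ω μ X P]; linarith
  · linarith
end
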